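/- In the braid group B_∞ with shift map ∂, the operations x * y = ∂x⁻¹ σ₁ ∂y x and x ∗̄ y = ∂x⁻¹ σ₁⁻¹ ∂y x form a bi-LD-system: all four mixed and pure left distributivity laws hold, i.e. x *_i (y *_j z) = (x *_i y) *_j (x *_i z) for i, j ∈ {*, ∗̄}. -/

import Mathlib

/-- The braid relations on infinitely many strands. The generator with index
`i : ℕ` represents `σ_{i+1}`. -/
def braidRels : Set (FreeGroup ℕ) :=
  {r | (∃ i j : ℕ, i + 2 ≤ j ∧
          r = FreeGroup.of i * FreeGroup.of j * (FreeGroup.of i)⁻¹ * (FreeGroup.of j)⁻¹) ∨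
       (∃ i : ℕ,
          r = FreeGroup.of i * FreeGroup.of (i + 1) * FreeGroup.of i *
            (FreeGroup.of (i + 1) * FreeGroup.of i * FreeGroup.of (i + 1))⁻¹)}

/-- The braid group `B_∞` on infinitely many strands. -/
abbrev BInf : Type := PresentedGroup braidRels

/-- The generator `σ_i` of `B_∞` (for `i ≥ 1`). -/
def sigma (i : ℕ) : BInf := PresentedGroup.of (i - 1)

theorem shift_aux : ∀ r ∈ braidRels,
    FreeGroup.lift (fun i => (PresentedGroup.of (i + 1) : BInf)) r = 1 := by
  have key : ∀ s ∈ braidRels, (PresentedGroup.mk braidRels s : BInf) = 1 := fun s hs =>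
    (QuotientGroup.eq_one_iff _).mpr (Subgroup.subset_normalClosure hs)
  rintro r (⟨i, j, hij, rfl⟩ | ⟨i, rfl⟩)
  · have := key _ (Or.inl ⟨i + 1, j + 1, by omega, rfl⟩)
    simpa [PresentedGroup.of, map_mul, map_inv, PresentedGroup.mk] using this
  · have := key _ (Or.inr ⟨i + 1, rfl⟩)
    simpa [PresentedGroup.of, map_mul, map_inv, PresentedGroup.mk] using this

/-- The shift endomorphism `∂ : B_∞ → B_∞`, `σ_i ↦ σ_{i+1}`. -/
noncomputable def shift : BInf →* BInf :=
  PresentedGroup.toGroup (f := fun i => (PresentedGroup.of (i + 1) : BInf)) shift_aux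

/-- Shifted conjugacy `x * y = ∂x⁻¹ · σ₁ · ∂y · x`. -/
noncomputable def sc (x y : BInf) : BInf := (shift x)⁻¹ * sigma 1 * shift y * x

/-- The second shifted conjugacy operation `x ∗̄ y = ∂x⁻¹ · σ₁⁻¹ · ∂y · x`. -/
noncomputable def scBar (x y : BInf) : BInf := (shift x)⁻¹ * (sigma 1)⁻¹ * shift y * x


lemma shift_of (i : ℕ) : shift (PresentedGroup.of i) = PresentedGroup.of (i + 1) :=
  PresentedGroup.toGroup.of shift_aux

lemma rel_one {r : FreeGroup ℕ} (hr : r ∈ braidRels) :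
    (PresentedGroup.mk braidRels r : BInf) = 1 :=
  (QuotientGroup.eq_one_iff _).mpr (Subgroup.subset_normalClosure hr)

lemma comm_rel (i j : ℕ) (h : i + 2 ≤ j) :
    (PresentedGroup.of i : BInf) * PresentedGroup.of j
      = PresentedGroup.of j * PresentedGroup.of i := by
  have := rel_one (Or.inl ⟨i, j, h, rfl⟩)
  simp only [PresentedGroup.of, map_mul, map_inv] at this
  have h2 := congrArg (· * ((PresentedGroup.mk braidRels (FreeGroup.of j) : BInf) *
    PresentedGroup.mk braidRels (FreeGroup.of i))) this
  simp [mul_assoc] at h2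
  exact h2

lemma braid_rel :
    (PresentedGroup.of 0 : BInf) * PresentedGroup.of 1 * PresentedGroup.of 0
      = PresentedGroup.of 1 * PresentedGroup.of 0 * PresentedGroup.of 1 := by
  have := rel_one (Or.inr ⟨0, rfl⟩)
  simp only [PresentedGroup.of, map_mul, map_inv] at this
  have h2 := congrArg (· * ((PresentedGroup.mk braidRels (FreeGroup.of 1) : BInf) *
    PresentedGroup.mk braidRels (FreeGroup.of 0) * PresentedGroup.mk braidRels (FreeGroup.of 1))) this
  simp [mul_assoc] at h2 ⊢
  exact h2

lemma comm_shift2 (x : BInf) : Commute (sigma 1) (shift (shift x)) := by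
  have key : (MulAut.conj (sigma 1)).toMonoidHom.comp (shift.comp shift) = shift.comp shift := by
    ext i
    simp only [MonoidHom.comp_apply, MulEquiv.coe_toMonoidHom, MulAut.conj_apply, shift_of, sigma]
    have h := comm_rel 0 (i + 1 + 1) (by omega)
    norm_num
    rw [h]
    simp
  have h := DFunLike.congr_fun key x
  simp only [MonoidHom.comp_apply, MulEquiv.coe_toMonoidHom, MulAut.conj_apply] at h
  have h2 := congrArg (· * sigma 1) h
  simpa [mul_assoc, Commute, SemiconjBy] using h2

lemma mulLeftComm {G : Type*} [Group G] {a b : G} (h : Commute a b) (c : G) :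
    a * (b * c) = b * (a * c) := by rw [← mul_assoc, h.eq, mul_assoc]

lemma key_lemma (s t : BInf)
    (hs : ∀ w : BInf, Commute s (shift (shift w)))
    (ht : ∀ w : BInf, Commute t (shift (shift w)))
    (hb : shift s * (s * shift t) = t * (shift s * s)) :
    ∀ x y z : BInf,
      (shift x)⁻¹ * s * shift ((shift y)⁻¹ * t * shift z * y) * x
        = (shift ((shift x)⁻¹ * s * shift y * x))⁻¹ * t *
            shift ((shift x)⁻¹ * s * shift z * x) * ((shift x)⁻¹ * s * shift y * x) := by
  intro x y z
  have hb' : ∀ w : BInf, s * (shift t * w) = (shift s)⁻¹ * (t * (shift s * (s * w))) := by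
    intro w
    rw [eq_inv_mul_iff_mul_eq]
    simp only [← mul_assoc] at hb ⊢
    rw [hb]
  simp only [map_mul, map_inv, mul_inv_rev, inv_inv, mul_assoc]
  rw [mulLeftComm (hs y).inv_right, hb', mul_inv_cancel_left,
    mulLeftComm (ht x).symm, mul_inv_cancel_left, mulLeftComm (hs z).symm]

/-- `(B_∞, *, ∗̄)` is a bi-LD-system: all four left distributivity laws hold. -/
theorem shifted_conjugacy_biLD :
    (∀ x y z : BInf, sc x (sc y z) = sc (sc x y) (sc x z)) ∧
    (∀ x y z : BInf, sc x (scBar y z) = scBar (sc x y) (sc x z)) ∧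
    (∀ x y z : BInf, scBar x (sc y z) = sc (scBar x y) (scBar x z)) ∧
    (∀ x y z : BInf, scBar x (scBar y z) = scBar (scBar x y) (scBar x z)) := by
  have sa : shift (sigma 1) = PresentedGroup.of 1 := by
    show shift (PresentedGroup.of (1 - 1)) = _
    norm_num [shift_of]
  have ha : (sigma 1 : BInf) = PresentedGroup.of 0 := rfl
  set a : BInf := PresentedGroup.of 0 with ha0
  set b : BInf := PresentedGroup.of 1 with hb0
  have h : a * b * a = b * a * b := braid_rel
  have hinv : a⁻¹ * (b⁻¹ * a⁻¹) = b⁻¹ * (a⁻¹ * b⁻¹) := by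
    have := congrArg (·⁻¹) h
    simpa [mul_assoc] using this
  have hcomm : ∀ w : BInf, Commute (sigma 1) (shift (shift w)) := comm_shift2
  have hcomm' : ∀ w : BInf, Commute ((sigma 1)⁻¹) (shift (shift w)) :=
    fun w => (hcomm w).inv_left
  refine ⟨?_, ?_, ?_, ?_⟩
  · intro x y z
    simp only [sc]
    refine key_lemma _ _ hcomm hcomm ?_ x y z
    rw [sa, ha]
    simp only [← mul_assoc]
    exact h.symm
  · intro x y z
    simp only [sc, scBar]
    refine key_lemma _ _ hcomm hcomm' ?_ x y z
    rw [map_inv, sa, ha]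
    have := congrArg (fun w => a⁻¹ * w * b⁻¹) h
    simpa [mul_assoc] using this
  · intro x y z
    simp only [sc, scBar]
    refine key_lemma _ _ hcomm' hcomm ?_ x y z
    rw [map_inv, sa, ha]
    have := congrArg (fun w => a * w * b) hinv
    simpa [mul_assoc] using this
  · intro x y z
    simp only [scBar]
    refine key_lemma _ _ hcomm' hcomm' ?_ x y z
    rw [map_inv, sa, ha]
    exact hinv.symm
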